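/- Let 1 < p ≤ 2. There exist constants 0 < c ≤ C, depending only on p, such that for every dimension d ≥ 1, every pair of relaxation parameters 0 < ε₋ ≤ ε₊ < ∞, and all vectors P, Q ∈ ℝ^d one has c · clamp(max(|P|,|Q|))^{p-2} · |P − Q|² ≤ (A_ε(P) − A_ε(Q)) · (P − Q) ≤ C · clamp(max(|P|,|Q|))^{p-2} · |P − Q|², where · on the middle expression denotes the Euclidean inner product. -/

import Mathlib

open Real

lemma key_scalar (p : ℝ) (hp1 : 1 < p) (hp2 : p ≤ 2) {u v : ℝ} (hu : 0 < u) (huv : u ≤ v) :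
    u ^ (p - 1) ≤ v ^ (p - 1) - (p - 1) * v ^ (p - 2) * (v - u) := by
  have hv : 0 < v := lt_of_lt_of_le hu huv
  have hb := rpow_one_add_le_one_add_mul_self (s := u / v - 1)
      (by nlinarith [div_nonneg hu.le hv.le]) (p := p - 1) (by linarith) (by linarith)
  rw [add_sub_cancel] at hb
  have h1 : (u / v) ^ (p - 1) = u ^ (p - 1) / v ^ (p - 1) := Real.div_rpow hu.le hv.le (p - 1)
  have hvp : (0:ℝ) < v ^ (p - 1) := Real.rpow_pos_of_pos hv _
  have h2 : v ^ (p - 1) = v ^ (p - 2) * v := by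
    rw [← Real.rpow_add_one hv.ne' (p - 2)]; ring_nf
  rw [h1] at hb
  have := (div_le_iff₀ hvp).mp hb
  calc u ^ (p-1) ≤ (1 + (p - 1) * (u / v - 1)) * v ^ (p-1) := this
    _ = v ^ (p-1) - (p-1) * v^(p-2) * (v - u) := by
        rw [h2]; field_simp; ring

lemma key_clamp (p εm εp : ℝ) (hp1 : 1 < p) (hp2 : p ≤ 2) (hεm : 0 < εm) (hε : εm ≤ εp)
    {s t : ℝ} (hs : 0 ≤ s) (hst : s ≤ t) :
    (max εm (min t εp)) ^ (p - 2) ≤ (max εm (min s εp)) ^ (p - 2) ∧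
    ((max εm (min s εp)) ^ (p - 2) - (max εm (min t εp)) ^ (p - 2)) * s
      ≤ (2 - p) * (max εm (min t εp)) ^ (p - 2) * (t - s) := by
  set u := max εm (min s εp) with hudef
  set v := max εm (min t εp) with hvdef
  have hu : 0 < u := lt_of_lt_of_le hεm (le_max_left _ _)
  have huv : u ≤ v := max_le_max le_rfl (min_le_min hst le_rfl)
  have hv : 0 < v := lt_of_lt_of_le hu huv
  have hab : v ^ (p - 2) ≤ u ^ (p - 2) :=
    Real.rpow_le_rpow_of_nonpos hu huv (by linarith)
  refine ⟨hab, ?_⟩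
  have ha : (0:ℝ) < v ^ (p - 2) := Real.rpow_pos_of_pos hv _
  rcases le_or_gt εp s with hsp | hsp
  · -- then u = v = εp
    have hus : u = εp := by rw [hudef, min_eq_right hsp, max_eq_right hε]
    have hvs : v = εp := by rw [hvdef, min_eq_right (le_trans hsp hst), max_eq_right hε]
    rw [hus, hvs]
    have : (2 - p) * εp ^ (p - 2) * (t - s) ≥ 0 := by
      apply mul_nonneg (mul_nonneg (by linarith) (Real.rpow_pos_of_pos (lt_of_lt_of_le hεm hε) _).le)
      linarith
    simpa using this
  · have hsu : s ≤ u := le_trans (by simp [min_eq_left hsp.le]) (le_max_right εm _)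
    have hvu : v - u ≤ t - s := by
      have h1 : v ≤ u + (t - s) := by
        apply max_le (le_trans (le_max_left εm (min s εp)) (by linarith))
        calc min t εp ≤ t := min_le_left _ _
          _ ≤ u + (t - s) := by linarith
      linarith
    have key := key_scalar p hp1 hp2 hu huv
    have h2 : u ^ (p - 2) * u = u ^ (p - 1) := by
      rw [← Real.rpow_add_one hu.ne' (p - 2)]; ring_nf
    have h3 : v ^ (p - 2) * v = v ^ (p - 1) := by
      rw [← Real.rpow_add_one hv.ne' (p - 2)]; ring_nf
    calc (u ^ (p - 2) - v ^ (p - 2)) * s ≤ (u ^ (p - 2) - v ^ (p - 2)) * u :=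
          mul_le_mul_of_nonneg_left hsu (by linarith)
      _ = u ^ (p - 1) - v ^ (p - 2) * u := by rw [← h2]; ring
      _ ≤ (2 - p) * v ^ (p - 2) * (v - u) := by nlinarith [key, h3]
      _ ≤ (2 - p) * v ^ (p - 2) * (t - s) := by
          apply mul_le_mul_of_nonneg_left hvu (mul_nonneg (by linarith) ha.le)

lemma key_vec (p εm εp : ℝ) (hp1 : 1 < p) (hp2 : p ≤ 2) (hεm : 0 < εm) (hε : εm ≤ εp)
    {d : ℕ} (P Q : EuclideanSpace ℝ (Fin d)) (hQP : ‖Q‖ ≤ ‖P‖) :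
    (p - 1) * (max εm (min ‖P‖ εp)) ^ (p - 2) * ‖P - Q‖ ^ 2
        ≤ (inner ℝ ((max εm (min ‖P‖ εp)) ^ (p - 2) • P
            - (max εm (min ‖Q‖ εp)) ^ (p - 2) • Q) (P - Q) : ℝ) ∧
    (inner ℝ ((max εm (min ‖P‖ εp)) ^ (p - 2) • P
        - (max εm (min ‖Q‖ εp)) ^ (p - 2) • Q) (P - Q) : ℝ)
      ≤ 2 * (max εm (min ‖P‖ εp)) ^ (p - 2) * ‖P - Q‖ ^ 2 := by
  set a := (max εm (min ‖P‖ εp)) ^ (p - 2) with ha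
  set b := (max εm (min ‖Q‖ εp)) ^ (p - 2) with hb
  have hapos : 0 < a := Real.rpow_pos_of_pos (lt_of_lt_of_le hεm (le_max_left _ _)) _
  obtain ⟨hab, hkey⟩ := key_clamp p εm εp hp1 hp2 hεm hε (norm_nonneg Q) hQP
  rw [← ha, ← hb] at hab hkey
  have expand : (inner ℝ (a • P - b • Q) (P - Q) : ℝ)
      = a * ‖P - Q‖ ^ 2 + (a - b) * inner ℝ Q (P - Q) := by
    have hP : P = (P - Q) + Q := by abel
    rw [inner_sub_left, real_inner_smul_left, real_inner_smul_left]
    nth_rewrite 1 [hP]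
    rw [inner_add_left, real_inner_self_eq_norm_sq]
    ring
  have hcross : |(a - b) * inner ℝ Q (P - Q)| ≤ (2 - p) * a * ‖P - Q‖ ^ 2 := by
    rw [abs_mul]
    have h1 : |a - b| = b - a := by rw [abs_sub_comm]; exact abs_of_nonneg (by linarith)
    rw [h1]
    calc (b - a) * |(inner ℝ Q (P - Q) : ℝ)| ≤ (b - a) * (‖Q‖ * ‖P - Q‖) :=
          mul_le_mul_of_nonneg_left (abs_real_inner_le_norm Q (P - Q)) (by linarith)
      _ = ((b - a) * ‖Q‖) * ‖P - Q‖ := by ring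
      _ ≤ ((2 - p) * a * (‖P‖ - ‖Q‖)) * ‖P - Q‖ :=
          mul_le_mul_of_nonneg_right hkey (norm_nonneg _)
      _ ≤ ((2 - p) * a * ‖P - Q‖) * ‖P - Q‖ := by
          apply mul_le_mul_of_nonneg_right _ (norm_nonneg _)
          exact mul_le_mul_of_nonneg_left (norm_sub_norm_le P Q)
            (mul_nonneg (by linarith) hapos.le)
      _ = (2 - p) * a * ‖P - Q‖ ^ 2 := by ring
  rw [expand]
  have h := abs_le.mp hcross
  constructor <;> nlinarith [h.1, h.2, mul_nonneg hapos.le (sq_nonneg ‖P - Q‖)]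

theorem stmt_0 (p : ℝ) (hp1 : 1 < p) (hp2 : p ≤ 2) :
    ∃ c C : ℝ, 0 < c ∧ c ≤ C ∧
      ∀ (d : ℕ), 1 ≤ d →
      ∀ εm εp : ℝ, 0 < εm → εm ≤ εp →
      ∀ P Q : EuclideanSpace ℝ (Fin d),
        c * (max εm (min (max ‖P‖ ‖Q‖) εp)) ^ (p - 2) * ‖P - Q‖ ^ 2
            ≤ (inner ℝ ((max εm (min ‖P‖ εp)) ^ (p - 2) • P
                - (max εm (min ‖Q‖ εp)) ^ (p - 2) • Q) (P - Q) : ℝ) ∧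
        (inner ℝ ((max εm (min ‖P‖ εp)) ^ (p - 2) • P
            - (max εm (min ‖Q‖ εp)) ^ (p - 2) • Q) (P - Q) : ℝ)
          ≤ C * (max εm (min (max ‖P‖ ‖Q‖) εp)) ^ (p - 2) * ‖P - Q‖ ^ 2 := by
  refine ⟨p - 1, 2, by linarith, by linarith, ?_⟩
  intro d _ εm εp hεm hε P Q
  rcases le_total ‖Q‖ ‖P‖ with h | h
  · rw [max_eq_left h]
    exact key_vec p εm εp hp1 hp2 hεm hε P Q h
  · rw [max_eq_right h]
    have hswap : (inner ℝ ((max εm (min ‖P‖ εp)) ^ (p - 2) • P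
        - (max εm (min ‖Q‖ εp)) ^ (p - 2) • Q) (P - Q) : ℝ)
        = (inner ℝ ((max εm (min ‖Q‖ εp)) ^ (p - 2) • Q
        - (max εm (min ‖P‖ εp)) ^ (p - 2) • P) (Q - P) : ℝ) := by
      rw [← inner_neg_neg]; congr 1 <;> abel
    rw [hswap]
    have hn : ‖P - Q‖ = ‖Q - P‖ := norm_sub_rev P Q
    rw [hn]
    exact key_vec p εm εp hp1 hp2 hεm hε Q P h
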